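/- Let A and B be positive semidefinite symmetric matrices with A ⪯ B (i.e., x^T A x ≤ x^T B x for all x). Then for all x orthogonal to the kernel of A, x^T A^+ x ≥ x^T B^+ x, where A^+ denotes the Moore–Penrose pseudoinverse. -/

import Mathlib

open Matrix

private lemma dot_shuffle {n : ℕ} (M : Matrix (Fin n) (Fin n) ℝ) (u v : Fin n → ℝ) :
    u ⬝ᵥ M.mulVec v = Mᵀ.mulVec u ⬝ᵥ v := by
  rw [Matrix.dotProduct_mulVec, Matrix.mulVec_transpose]

private lemma psd_nonneg {n : ℕ} {A : Matrix (Fin n) (Fin n) ℝ} (hA : A.PosSemidef)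
    (w : Fin n → ℝ) : 0 ≤ w ⬝ᵥ A.mulVec w := by
  have := hA.dotProduct_mulVec_nonneg w
  simpa using this

private lemma psd_zero {n : ℕ} {A : Matrix (Fin n) (Fin n) ℝ} (hA : A.PosSemidef)
    (w : Fin n → ℝ) (h : w ⬝ᵥ A.mulVec w = 0) : A.mulVec w = 0 := by
  have := (hA.dotProduct_mulVec_zero_iff w).mp (by simpa using h)
  exact this

/-- If `R` is a generalized inverse of `M` with `R*M` symmetric, and `x` is orthogonal to
the kernel of `M`, then `(R*M) x = x`. -/
private lemma proj_eq {n : ℕ} {M R : Matrix (Fin n) (Fin n) ℝ}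
    (hMRM : M * R * M = M) (hsym : (R * M)ᵀ = R * M)
    (x : Fin n → ℝ) (hx : ∀ y, M.mulVec y = 0 → x ⬝ᵥ y = 0) :
    (R * M).mulVec x = x := by
  set z := x - (R * M).mulVec x with hz
  have hMz : M.mulVec z = 0 := by
    rw [hz, Matrix.mulVec_sub, Matrix.mulVec_mulVec, ← Matrix.mul_assoc, hMRM, sub_self]
  have h1 : x ⬝ᵥ z = 0 := hx z hMz
  have h2 : (R * M).mulVec x ⬝ᵥ z = 0 := by
    have : (R * M).mulVec x ⬝ᵥ z = x ⬝ᵥ (R * M)ᵀ.mulVec z := by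
      rw [dot_shuffle, Matrix.transpose_transpose]
    rw [this, hsym, ← Matrix.mulVec_mulVec, hMz, Matrix.mulVec_zero, dotProduct_zero]
  have hzz : z ⬝ᵥ z = 0 := by
    have : z ⬝ᵥ z = x ⬝ᵥ z - (R * M).mulVec x ⬝ᵥ z := by
      rw [hz, sub_dotProduct]
    rw [this, h1, h2, sub_zero]
  have : z = 0 := by
    ext i
    have := dotProduct_self_eq_zero.mp hzz
    simpa using congrFun this i
  have := sub_eq_zero.mp (hz ▸ this)
  exact this.symm

/-- `P` is the Moore–Penrose pseudoinverse of `A`: the four Penrose conditions. -/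
def IsMoorePenrose {n : ℕ} (A P : Matrix (Fin n) (Fin n) ℝ) : Prop :=
  A * P * A = A ∧ P * A * P = P ∧ (A * P)ᵀ = A * P ∧ (P * A)ᵀ = P * A

/-- If `A ⪯ B` are positive semidefinite symmetric matrices, then for all `x`
orthogonal to the kernel of `A`, `xᵀ A⁺ x ≥ xᵀ B⁺ x`. -/
theorem stmt_7 {n : ℕ} (A B P Q : Matrix (Fin n) (Fin n) ℝ)
    (hA : A.PosSemidef) (hB : B.PosSemidef)
    (hAB : ∀ x : Fin n → ℝ, x ⬝ᵥ A.mulVec x ≤ x ⬝ᵥ B.mulVec x)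
    (hP : IsMoorePenrose A P) (hQ : IsMoorePenrose B Q)
    (x : Fin n → ℝ) (hx : ∀ y : Fin n → ℝ, A.mulVec y = 0 → x ⬝ᵥ y = 0) :
    x ⬝ᵥ Q.mulVec x ≤ x ⬝ᵥ P.mulVec x := by
  obtain ⟨hAPA, hPAP, hAPs, hPAs⟩ := hP
  obtain ⟨hBQB, hQBQ, hBQs, hQBs⟩ := hQ
  have hAs : Aᵀ = A := hA.1
  have hBs : Bᵀ = B := hB.1
  -- kernel of B is contained in kernel of A
  have hker : ∀ y, B.mulVec y = 0 → A.mulVec y = 0 := by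
    intro y hy
    apply psd_zero hA
    have h1 : y ⬝ᵥ A.mulVec y ≤ 0 := by
      have := hAB y
      rw [hy, dotProduct_zero] at this
      exact this
    exact le_antisymm h1 (psd_nonneg hA y)
  have hxB : ∀ y, B.mulVec y = 0 → x ⬝ᵥ y = 0 := fun y hy => hx y (hker y hy)
  -- projections fix x
  have hPAx : (P * A).mulVec x = x := proj_eq hAPA hPAs x hx
  have hQBx : (Q * B).mulVec x = x := proj_eq hBQB hQBs x hxB
  -- x = A p with p = Pᵀ x
  set p := Pᵀ.mulVec x with hp
  have hApx : A.mulVec p = x := by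
    have : (P * A)ᵀ = A * Pᵀ := by rw [Matrix.transpose_mul, hAs]
    calc A.mulVec p = (A * Pᵀ).mulVec x := by rw [hp, Matrix.mulVec_mulVec]
    _ = (P * A).mulVec x := by rw [← this, hPAs]
    _ = x := hPAx
  -- x = B y with y = Qᵀ x
  set y := Qᵀ.mulVec x with hy
  have hByx : B.mulVec y = x := by
    have : (Q * B)ᵀ = B * Qᵀ := by rw [Matrix.transpose_mul, hBs]
    calc B.mulVec y = (B * Qᵀ).mulVec x := by rw [hy, Matrix.mulVec_mulVec]
    _ = (Q * B).mulVec x := by rw [← this, hQBs]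
    _ = x := hQBx
  -- x ⬝ Q x = 2 x⬝y − y⬝By
  have hxy : x ⬝ᵥ y = x ⬝ᵥ Q.mulVec x := by
    rw [hy, dot_shuffle, Matrix.transpose_transpose, dotProduct_comm]
  have hyBy : y ⬝ᵥ B.mulVec y = x ⬝ᵥ Q.mulVec x := by
    rw [hByx, ← hxy, dotProduct_comm]
  -- x ⬝ P x = p ⬝ A p
  have hxPx : x ⬝ᵥ P.mulVec x = p ⬝ᵥ A.mulVec p := by
    rw [hApx, dot_shuffle]
  -- key quadratic inequality : 2 x⬝y − y⬝Ay ≤ p⬝Ap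
  have hxy' : x ⬝ᵥ y = p ⬝ᵥ A.mulVec y := by
    calc x ⬝ᵥ y = A.mulVec p ⬝ᵥ y := by rw [hApx]
    _ = p ⬝ᵥ A.mulVec y := by rw [dot_shuffle A p y, hAs]
  have hsq : 0 ≤ (p - y) ⬝ᵥ A.mulVec (p - y) := psd_nonneg hA _
  have hexp : (p - y) ⬝ᵥ A.mulVec (p - y)
      = p ⬝ᵥ A.mulVec p - 2 * (p ⬝ᵥ A.mulVec y) + y ⬝ᵥ A.mulVec y := by
    have hcomm : y ⬝ᵥ A.mulVec p = p ⬝ᵥ A.mulVec y := by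
      rw [dot_shuffle, hAs, dotProduct_comm]
    rw [Matrix.mulVec_sub, sub_dotProduct, dotProduct_sub, dotProduct_sub, hcomm]
    ring
  have key : 2 * (x ⬝ᵥ y) - y ⬝ᵥ A.mulVec y ≤ p ⬝ᵥ A.mulVec p := by
    rw [hxy']; linarith [hsq, hexp ▸ hsq]
  have hAB' := hAB y
  calc x ⬝ᵥ Q.mulVec x = 2 * (x ⬝ᵥ y) - y ⬝ᵥ B.mulVec y := by rw [hxy, hyBy]; ring
  _ ≤ 2 * (x ⬝ᵥ y) - y ⬝ᵥ A.mulVec y := by linarith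
  _ ≤ p ⬝ᵥ A.mulVec p := key
  _ = x ⬝ᵥ P.mulVec x := hxPx.symm
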